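/- Let k ≥ 1 and n = 5(2k+1), and let ρ_0,…,ρ_{n−1} denote the rows of the matrix Z_n. Then ∑_{j=0}^{2k} (ρ_{5j} + ρ_{5j+3} − ρ_{5j+4}) = 0 (the zero vector in ℂ^n), and consequently the rank of Z_n over ℂ is at most n − 2. -/

import Mathlib

open BigOperators Matrix

/-- Rows `r_0,…,r_4` of `Z_n`:
`r_0 = (0, 1^{(n−1)/2}, (−1)^{(n−1)/2})`,
`r_1 = (−1, 0, 2, 2, 1^{(n−7)/2}, (−1)^{(n−1)/2})`,
`r_2 = (−1, −2, 0, 2, 1^{(n−3)/2}, (−1)^{(n−5)/2})`,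
`r_3 = (−1, −2, −2, 0, 1^{(n+1)/2}, (−1)^{(n−9)/2})`,
`r_4 = (−1, −1, −1, −1, 0, 1^{(n−1)/2}, (−1)^{(n−9)/2})`. -/
def zRow (n s t : ℕ) : ℂ :=
  match s with
  | 0 => if t = 0 then 0 else if t ≤ (n - 1) / 2 then 1 else -1
  | 1 => if t = 0 then -1 else if t = 1 then 0 else if t ≤ 3 then 2
         else if t ≤ (n - 1) / 2 then 1 else -1
  | 2 => if t = 0 then -1 else if t = 1 then -2 else if t = 2 then 0 else if t = 3 then 2
         else if t ≤ (n + 3) / 2 then 1 else -1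
  | 3 => if t = 0 then -1 else if t ≤ 2 then -2 else if t = 3 then 0
         else if t ≤ (n + 7) / 2 then 1 else -1
  | _ => if t ≤ 3 then -1 else if t = 4 then 0 else if t ≤ (n + 7) / 2 then 1 else -1

/-- The matrix `Z_n` (for `n = 5(2k+1)`): rows `r_0,…,r_4` as above and
`r_i = T⁵(r_{i−5})` for `5 ≤ i ≤ n−1`. -/
def Zmat (n : ℕ) : Matrix (Fin n) (Fin n) ℂ :=
  Matrix.of fun i j => zRow n (i.val % 5) ((j.val + n - (i.val - i.val % 5)) % n)

/-! ### Auxiliary value lemmas -/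

lemma Fval (k u : ℕ) (hk : 1 ≤ k) :
    zRow (5*(2*k+1)) 0 u + zRow (5*(2*k+1)) 3 u - zRow (5*(2*k+1)) 4 u =
      if u ≤ 2 then 0 else if u ≤ 4 then 2 else if u ≤ 5*k+2 then 1 else -1 := by
  simp only [zRow]
  rw [show (5*(2*k+1)-1)/2 = 5*k+2 by omega, show (5*(2*k+1)+7)/2 = 5*k+6 by omega]
  split_ifs <;> first | omega | norm_num

set_option maxHeartbeats 2000000 in
lemma Hval234 (k u : ℕ) (hk : 1 ≤ k) :
    zRow (5*(2*k+1)) 2 u + zRow (5*(2*k+1)) 3 u + zRow (5*(2*k+1)) 4 u =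
      if u = 1 then -5 else if u ≤ 2 then -3 else if u = 3 then 1 else if u = 4 then 2
      else if u ≤ 5*k+4 then 3 else if u ≤ 5*k+6 then 1 else -3 := by
  simp only [zRow]
  rw [show (5*(2*k+1)+3)/2 = 5*k+4 by omega, show (5*(2*k+1)+7)/2 = 5*k+6 by omega]
  split_ifs <;> first | omega | norm_num

lemma Hval01 (k u : ℕ) (hk : 1 ≤ k) :
    zRow (5*(2*k+1)) 0 u + zRow (5*(2*k+1)) 1 u =
      if u = 0 then -1 else if u = 1 then 1 else if u ≤ 3 then 3
      else if u ≤ 5*k+2 then 2 else -2 := by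
  simp only [zRow]
  rw [show (5*(2*k+1)-1)/2 = 5*k+2 by omega]
  split_ifs <;> first | omega | norm_num

set_option maxHeartbeats 1000000 in
lemma Hval (k u : ℕ) (hk : 1 ≤ k) :
    zRow (5*(2*k+1)) 0 u + zRow (5*(2*k+1)) 1 u + zRow (5*(2*k+1)) 2 u
      + zRow (5*(2*k+1)) 3 u + zRow (5*(2*k+1)) 4 u =
      if u ≤ 1 then -4 else if u = 2 then 0 else if u ≤ 4 then 4
      else if u ≤ 5*k+2 then 5 else if u ≤ 5*k+4 then 1
      else if u ≤ 5*k+6 then -1 else -5 := by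
  have h : zRow (5*(2*k+1)) 0 u + zRow (5*(2*k+1)) 1 u + zRow (5*(2*k+1)) 2 u
      + zRow (5*(2*k+1)) 3 u + zRow (5*(2*k+1)) 4 u
      = (zRow (5*(2*k+1)) 0 u + zRow (5*(2*k+1)) 1 u)
        + (zRow (5*(2*k+1)) 2 u + zRow (5*(2*k+1)) 3 u + zRow (5*(2*k+1)) 4 u) := by ring
  rw [h, Hval01 k u hk, Hval234 k u hk]
  split_ifs <;> first | omega | norm_num

/-! ### Summation pattern -/

lemma sum_pattern (N K L : ℕ) (hN : N = K+L+2) (a b c d : ℂ) (f : ℕ → ℂ)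
    (h0 : f 0 = a) (h1 : ∀ m, 1 ≤ m → m ≤ K → f m = b) (h2 : f (K+1) = c)
    (h3 : ∀ m, K+2 ≤ m → m ≤ K+1+L → f m = d)
    (hsum : a + K * b + c + L * d = 0) :
    ∑ m ∈ Finset.range N, f m = 0 := by
  subst hN
  rw [Finset.range_eq_Ico,
    ← Finset.sum_Ico_consecutive f (by omega : (0:ℕ) ≤ 1) (by omega : (1:ℕ) ≤ K+L+2),
    ← Finset.sum_Ico_consecutive (m := 1) f (by omega : (1:ℕ) ≤ K+1) (by omega : K+1 ≤ K+L+2),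
    ← Finset.sum_Ico_consecutive (m := K+1) f (by omega : K+1 ≤ K+2) (by omega : K+2 ≤ K+L+2)]
  have e0 : ∑ m ∈ Finset.Ico 0 1, f m = a := by
    rw [show (1:ℕ) = 0+1 from rfl, Nat.Ico_succ_singleton, Finset.sum_singleton, h0]
  have e1 : ∑ m ∈ Finset.Ico 1 (K+1), f m = K * b := by
    have h : ∑ m ∈ Finset.Ico 1 (K+1), f m = ∑ _m ∈ Finset.Ico 1 (K+1), b :=
      Finset.sum_congr rfl (fun m hm => by rw [Finset.mem_Ico] at hm; exact h1 m hm.1 (by omega))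
    rw [h, Finset.sum_const, Nat.card_Ico, show K+1-1 = K by omega, nsmul_eq_mul]
  have e2 : ∑ m ∈ Finset.Ico (K+1) (K+2), f m = c := by
    rw [Nat.Ico_succ_singleton, Finset.sum_singleton, h2]
  have e3 : ∑ m ∈ Finset.Ico (K+2) (K+L+2), f m = L * d := by
    have h : ∑ m ∈ Finset.Ico (K+2) (K+L+2), f m = ∑ _m ∈ Finset.Ico (K+2) (K+L+2), d :=
      Finset.sum_congr rfl (fun m hm => by rw [Finset.mem_Ico] at hm; exact h3 m hm.1 (by omega))
    rw [h, Finset.sum_const, Nat.card_Ico, show K+L+2-(K+2) = L by omega, nsmul_eq_mul]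
  rw [e0, e1, e2, e3]
  linear_combination hsum

/-! ### Class sums -/

lemma Fclass (k c : ℕ) (hk : 1 ≤ k) (hc : c < 5) :
    ∑ m ∈ Finset.range (2*k+1),
      (zRow (5*(2*k+1)) 0 (c+5*m) + zRow (5*(2*k+1)) 3 (c+5*m)
        - zRow (5*(2*k+1)) 4 (c+5*m)) = 0 := by
  by_cases h2 : c ≤ 2
  · refine sum_pattern (2*k+1) k (k-1) (by omega) 0 1 (-1) (-1) _ ?_ ?_ ?_ ?_ ?_
    · rw [Fval k _ hk, if_pos (by omega)]
    · intro m hm1 hm2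
      rw [Fval k _ hk, if_neg (by omega), if_neg (by omega), if_pos (by omega)]
    · rw [Fval k _ hk, if_neg (by omega), if_neg (by omega), if_neg (by omega)]
    · intro m hm1 hm2
      rw [Fval k _ hk, if_neg (by omega), if_neg (by omega), if_neg (by omega)]
    · rw [Nat.cast_sub hk]
      push_cast
      ring
  · refine sum_pattern (2*k+1) (k-1) k (by omega) 2 1 (-1) (-1) _ ?_ ?_ ?_ ?_ ?_
    · rw [Fval k _ hk, if_neg (by omega), if_pos (by omega)]
    · intro m hm1 hm2
      rw [Fval k _ hk, if_neg (by omega), if_neg (by omega), if_pos (by omega)]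
    · rw [Fval k _ hk, if_neg (by omega), if_neg (by omega), if_neg (by omega)]
    · intro m hm1 hm2
      rw [Fval k _ hk, if_neg (by omega), if_neg (by omega), if_neg (by omega)]
    · rw [Nat.cast_sub hk]
      push_cast
      ring

lemma Hclass (k c : ℕ) (hk : 1 ≤ k) (hc : c < 5) :
    ∑ m ∈ Finset.range (2*k+1),
      (zRow (5*(2*k+1)) 0 (c+5*m) + zRow (5*(2*k+1)) 1 (c+5*m) + zRow (5*(2*k+1)) 2 (c+5*m)
        + zRow (5*(2*k+1)) 3 (c+5*m) + zRow (5*(2*k+1)) 4 (c+5*m)) = 0 := by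
  by_cases h1 : c ≤ 1
  · refine sum_pattern (2*k+1) k (k-1) (by omega) (-4) 5 (-1) (-5) _ ?_ ?_ ?_ ?_ ?_
    · rw [Hval k _ hk, if_pos (by omega)]
    · intro m hm1 hm2
      rw [Hval k _ hk, if_neg (by omega), if_neg (by omega), if_neg (by omega),
        if_pos (by omega)]
    · rw [Hval k _ hk, if_neg (by omega), if_neg (by omega), if_neg (by omega),
        if_neg (by omega), if_neg (by omega), if_pos (by omega)]
    · intro m hm1 hm2
      rw [Hval k _ hk, if_neg (by omega), if_neg (by omega), if_neg (by omega),
        if_neg (by omega), if_neg (by omega), if_neg (by omega)]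
    · rw [Nat.cast_sub hk]
      push_cast
      ring
  · by_cases h2 : c = 2
    · refine sum_pattern (2*k+1) k (k-1) (by omega) 0 5 (-5) (-5) _ ?_ ?_ ?_ ?_ ?_
      · rw [Hval k _ hk, if_neg (by omega), if_pos (by omega)]
      · intro m hm1 hm2
        rw [Hval k _ hk, if_neg (by omega), if_neg (by omega), if_neg (by omega),
          if_pos (by omega)]
      · rw [Hval k _ hk, if_neg (by omega), if_neg (by omega), if_neg (by omega),
          if_neg (by omega), if_neg (by omega), if_neg (by omega)]
      · intro m hm1 hm2
        rw [Hval k _ hk, if_neg (by omega), if_neg (by omega), if_neg (by omega),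
          if_neg (by omega), if_neg (by omega), if_neg (by omega)]
      · rw [Nat.cast_sub hk]
        push_cast
        ring
    · refine sum_pattern (2*k+1) (k-1) k (by omega) 4 5 1 (-5) _ ?_ ?_ ?_ ?_ ?_
      · rw [Hval k _ hk, if_neg (by omega), if_neg (by omega), if_pos (by omega)]
      · intro m hm1 hm2
        rw [Hval k _ hk, if_neg (by omega), if_neg (by omega), if_neg (by omega),
          if_pos (by omega)]
      · rw [Hval k _ hk, if_neg (by omega), if_neg (by omega), if_neg (by omega),
          if_neg (by omega), if_pos (by omega)]
      · intro m hm1 hm2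
        rw [Hval k _ hk, if_neg (by omega), if_neg (by omega), if_neg (by omega),
          if_neg (by omega), if_neg (by omega), if_neg (by omega)]
      · rw [Nat.cast_sub hk]
        push_cast
        ring

/-! ### Reindexing -/

lemma mod_split (c a N : ℕ) (hc : c < 5) (hN : 0 < N) :
    (c + 5*a) % (5*N) = c + 5*(a % N) := by
  obtain ⟨r, d, hrd, hr⟩ : ∃ r d, r + N * d = a ∧ r < N :=
    ⟨a % N, a / N, Nat.mod_add_div a N, Nat.mod_lt a hN⟩
  have h1 : a % N = r := by
    rw [← hrd, Nat.add_mul_mod_self_left, Nat.mod_eq_of_lt hr]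
  rw [h1, ← hrd, show c + 5*(r + N*d) = (c + 5*r) + d*(5*N) by ring,
    Nat.add_mul_mod_self_right, Nat.mod_eq_of_lt (by omega)]

lemma shift_sum (N : ℕ) (hN : 0 < N) (q : ℕ) (G : ℕ → ℂ) :
    ∑ j : Fin N, G ((q + N - j.val) % N) = ∑ m ∈ Finset.range N, G m := by
  rw [← Fin.sum_univ_eq_sum_range]
  have he : Function.Involutive
      (fun j : Fin N => (⟨(q + N - j.val) % N, Nat.mod_lt _ hN⟩ : Fin N)) := by
    intro j
    apply Fin.ext
    simp only
    have hj := j.isLt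
    have h1 := Nat.mod_add_div (q + N - j.val) N
    have h2 : (q + N - j.val) % N < N := Nat.mod_lt _ hN
    set r := (q + N - j.val) % N with hr
    set d := (q + N - j.val) / N with hd
    have h3 : q + N - r = j.val + N * d := by omega
    rw [h3, Nat.add_mul_mod_self_left, Nat.mod_eq_of_lt hj]
  exact Fintype.sum_bijective _ he.bijective _ _ (fun j => rfl)

lemma Zmat_entry (k : ℕ) (i t : Fin (5*(2*k+1))) :
    Zmat (5*(2*k+1)) i t = zRow (5*(2*k+1)) (i.val % 5)
      (t.val % 5 + 5*((t.val/5 + (2*k+1) - i.val/5) % (2*k+1))) := by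
  show zRow _ (i.val % 5) _ = _
  congr 1
  have hi := i.isLt
  have ht := t.isLt
  rw [show t.val + 5*(2*k+1) - (i.val - i.val % 5)
      = t.val % 5 + 5*(t.val/5 + (2*k+1) - i.val/5) by omega]
  exact mod_split _ _ _ (by omega) (by omega)

lemma Zmat_entry' (k i : ℕ) (hi : i < 5*(2*k+1)) (t : Fin (5*(2*k+1))) :
    Zmat (5*(2*k+1)) ⟨i, hi⟩ t = zRow (5*(2*k+1)) (i % 5)
      (t.val % 5 + 5*((t.val/5 + (2*k+1) - i/5) % (2*k+1))) :=
  Zmat_entry k ⟨i, hi⟩ t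

def rowIdx (k : ℕ) (p : Fin (2*k+1) × Fin 5) : Fin (5*(2*k+1)) :=
  ⟨5*p.1.val + p.2.val, by have := p.1.isLt; have := p.2.isLt; omega⟩

@[simp] lemma rowIdx_val (k : ℕ) (j : Fin (2*k+1)) (s : Fin 5) :
    (rowIdx k (j, s)).val = 5*j.val + s.val := rfl

lemma rowIdx_bij (k : ℕ) : Function.Bijective (rowIdx k) := by
  rw [Fintype.bijective_iff_injective_and_card]
  constructor
  · intro p q hpq
    obtain ⟨p1, p2⟩ := p
    obtain ⟨q1, q2⟩ := q
    have h := congrArg Fin.val hpq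
    simp only [rowIdx_val] at h
    have h1 := p2.isLt
    have h2 := q2.isLt
    have e2 : p2 = q2 := Fin.ext (by omega)
    have e1 : p1 = q1 := Fin.ext (by omega)
    rw [e1, e2]
  · simp only [Fintype.card_prod, Fintype.card_fin]
    ring

lemma sum_rows_split (k : ℕ) (g : Fin (5*(2*k+1)) → ℂ) :
    ∑ i, g i = ∑ j : Fin (2*k+1), ∑ s : Fin 5, g (rowIdx k (j, s)) := by
  calc ∑ i, g i = ∑ p : Fin (2*k+1) × Fin 5, g (rowIdx k p) :=
        (Fintype.sum_bijective _ (rowIdx_bij k) _ _ (fun p => rfl)).symm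
    _ = ∑ j : Fin (2*k+1), ∑ s : Fin 5, g (rowIdx k (j, s)) := Fintype.sum_prod_type _

lemma Zmat_rowIdx (k : ℕ) (j : Fin (2*k+1)) (s : Fin 5) (t : Fin (5*(2*k+1))) :
    Zmat (5*(2*k+1)) (rowIdx k (j, s)) t
      = zRow (5*(2*k+1)) s.val
        (t.val % 5 + 5*((t.val/5 + (2*k+1) - j.val) % (2*k+1))) := by
  have hs := s.isLt
  have h1 : (rowIdx k (j, s)).val % 5 = s.val := by
    rw [rowIdx_val]
    omega
  have h2 : (rowIdx k (j, s)).val / 5 = j.val := by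
    rw [rowIdx_val]
    omega
  rw [Zmat_entry, h1, h2]

/-! ### The kernel vector for the first relation -/

def vOne (k : ℕ) : Fin (5*(2*k+1)) → ℂ := fun i =>
  if i.val % 5 = 0 then 1 else if i.val % 5 = 3 then 1 else if i.val % 5 = 4 then -1 else 0

lemma vOne_rowIdx (k : ℕ) (j : Fin (2*k+1)) (s : Fin 5) :
    vOne k (rowIdx k (j, s)) =
      if s.val = 0 then 1 else if s.val = 3 then 1 else if s.val = 4 then -1 else 0 := by
  have hs := s.isLt
  have h1 : (rowIdx k (j, s)).val % 5 = s.val := by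
    rw [rowIdx_val]
    omega
  simp only [vOne, h1]

/-- For `n = 5(2k+1)`, the rows `ρ_0,…,ρ_{n−1}` of `Z_n`
satisfy `∑_{j=0}^{2k} (ρ_{5j} + ρ_{5j+3} − ρ_{5j+4}) = 0`, and consequently
`rank Z_n ≤ n − 2`. -/
theorem Zmat_rows_relation_and_rank (k n : ℕ) (hk : 1 ≤ k)
    (hn : n = 5 * (2 * k + 1)) :
    (∑ j : Fin (2 * k + 1),
        (Zmat n ⟨5 * j.val, by have := j.isLt; omega⟩
          + Zmat n ⟨5 * j.val + 3, by have := j.isLt; omega⟩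
          - Zmat n ⟨5 * j.val + 4, by have := j.isLt; omega⟩)) = 0 ∧
    (Zmat n).rank ≤ n - 2 := by
  subst hn
  have c0 : ((0 : Fin 5) : ℕ) = 0 := rfl
  have c1 : ((1 : Fin 5) : ℕ) = 1 := rfl
  have c2 : ((2 : Fin 5) : ℕ) = 2 := rfl
  have c3 : ((3 : Fin 5) : ℕ) = 3 := rfl
  have c4 : ((4 : Fin 5) : ℕ) = 4 := rfl
  -- pointwise version of the row relation
  have hF : ∀ t : Fin (5*(2*k+1)),
      ∑ j : Fin (2*k+1),
        (Zmat (5*(2*k+1)) ⟨5 * j.val, by have := j.isLt; omega⟩ t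
          + Zmat (5*(2*k+1)) ⟨5 * j.val + 3, by have := j.isLt; omega⟩ t
          - Zmat (5*(2*k+1)) ⟨5 * j.val + 4, by have := j.isLt; omega⟩ t) = 0 := by
    intro t
    calc ∑ j : Fin (2*k+1),
        (Zmat (5*(2*k+1)) ⟨5 * j.val, by have := j.isLt; omega⟩ t
          + Zmat (5*(2*k+1)) ⟨5 * j.val + 3, by have := j.isLt; omega⟩ t
          - Zmat (5*(2*k+1)) ⟨5 * j.val + 4, by have := j.isLt; omega⟩ t)
        = ∑ j : Fin (2*k+1),
          (zRow (5*(2*k+1)) 0 (t.val % 5 + 5*((t.val/5 + (2*k+1) - j.val) % (2*k+1)))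
            + zRow (5*(2*k+1)) 3 (t.val % 5 + 5*((t.val/5 + (2*k+1) - j.val) % (2*k+1)))
            - zRow (5*(2*k+1)) 4 (t.val % 5 + 5*((t.val/5 + (2*k+1) - j.val) % (2*k+1)))) := by
          refine Finset.sum_congr rfl (fun j _ => ?_)
          have hj := j.isLt
          rw [Zmat_entry' k (5*j.val) (by omega) t,
            Zmat_entry' k (5*j.val+3) (by omega) t,
            Zmat_entry' k (5*j.val+4) (by omega) t,
            show (5*j.val) % 5 = 0 by omega, show (5*j.val) / 5 = j.val by omega,
            show (5*j.val+3) % 5 = 3 by omega, show (5*j.val+3) / 5 = j.val by omega,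
            show (5*j.val+4) % 5 = 4 by omega, show (5*j.val+4) / 5 = j.val by omega]
      _ = ∑ m ∈ Finset.range (2*k+1),
          (zRow (5*(2*k+1)) 0 (t.val % 5 + 5*m) + zRow (5*(2*k+1)) 3 (t.val % 5 + 5*m)
            - zRow (5*(2*k+1)) 4 (t.val % 5 + 5*m)) :=
        shift_sum (2*k+1) (by omega) (t.val/5)
          (fun m => zRow (5*(2*k+1)) 0 (t.val % 5 + 5*m) + zRow (5*(2*k+1)) 3 (t.val % 5 + 5*m)
            - zRow (5*(2*k+1)) 4 (t.val % 5 + 5*m))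
      _ = 0 := Fclass k (t.val % 5) hk (by omega)
  -- the all-rows relation
  have hH : ∀ t : Fin (5*(2*k+1)),
      ∑ i : Fin (5*(2*k+1)), Zmat (5*(2*k+1)) i t = 0 := by
    intro t
    calc ∑ i : Fin (5*(2*k+1)), Zmat (5*(2*k+1)) i t
        = ∑ j : Fin (2*k+1), ∑ s : Fin 5, Zmat (5*(2*k+1)) (rowIdx k (j, s)) t :=
          sum_rows_split k (fun i => Zmat (5*(2*k+1)) i t)
      _ = ∑ j : Fin (2*k+1),
          (zRow (5*(2*k+1)) 0 (t.val % 5 + 5*((t.val/5 + (2*k+1) - j.val) % (2*k+1)))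
            + zRow (5*(2*k+1)) 1 (t.val % 5 + 5*((t.val/5 + (2*k+1) - j.val) % (2*k+1)))
            + zRow (5*(2*k+1)) 2 (t.val % 5 + 5*((t.val/5 + (2*k+1) - j.val) % (2*k+1)))
            + zRow (5*(2*k+1)) 3 (t.val % 5 + 5*((t.val/5 + (2*k+1) - j.val) % (2*k+1)))
            + zRow (5*(2*k+1)) 4 (t.val % 5 + 5*((t.val/5 + (2*k+1) - j.val) % (2*k+1)))) := by
          refine Finset.sum_congr rfl (fun j _ => ?_)
          rw [Fin.sum_univ_five, Zmat_rowIdx, Zmat_rowIdx, Zmat_rowIdx, Zmat_rowIdx,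
            Zmat_rowIdx, c0, c1, c2, c3, c4]
      _ = ∑ m ∈ Finset.range (2*k+1),
          (zRow (5*(2*k+1)) 0 (t.val % 5 + 5*m) + zRow (5*(2*k+1)) 1 (t.val % 5 + 5*m)
            + zRow (5*(2*k+1)) 2 (t.val % 5 + 5*m) + zRow (5*(2*k+1)) 3 (t.val % 5 + 5*m)
            + zRow (5*(2*k+1)) 4 (t.val % 5 + 5*m)) :=
        shift_sum (2*k+1) (by omega) (t.val/5)
          (fun m => zRow (5*(2*k+1)) 0 (t.val % 5 + 5*m) + zRow (5*(2*k+1)) 1 (t.val % 5 + 5*m)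
            + zRow (5*(2*k+1)) 2 (t.val % 5 + 5*m) + zRow (5*(2*k+1)) 3 (t.val % 5 + 5*m)
            + zRow (5*(2*k+1)) 4 (t.val % 5 + 5*m))
      _ = 0 := Hclass k (t.val % 5) hk (by omega)
  refine ⟨?_, ?_⟩
  · funext t
    rw [Finset.sum_apply]
    simp only [Pi.add_apply, Pi.sub_apply, Pi.zero_apply]
    exact hF t
  · -- rank bound
    have hm1 : vOne k ∈ LinearMap.ker ((Zmat (5*(2*k+1)))ᵀ.mulVecLin) := by
      rw [LinearMap.mem_ker, Matrix.mulVecLin_apply]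
      funext t
      simp only [Matrix.mulVec, dotProduct, Matrix.transpose_apply, Pi.zero_apply]
      calc ∑ i : Fin (5*(2*k+1)), Zmat (5*(2*k+1)) i t * vOne k i
          = ∑ j : Fin (2*k+1), ∑ s : Fin 5,
              Zmat (5*(2*k+1)) (rowIdx k (j, s)) t * vOne k (rowIdx k (j, s)) :=
            sum_rows_split k (fun i => Zmat (5*(2*k+1)) i t * vOne k i)
        _ = ∑ j : Fin (2*k+1),
            (zRow (5*(2*k+1)) 0 (t.val % 5 + 5*((t.val/5 + (2*k+1) - j.val) % (2*k+1)))
              + zRow (5*(2*k+1)) 3 (t.val % 5 + 5*((t.val/5 + (2*k+1) - j.val) % (2*k+1)))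
              - zRow (5*(2*k+1)) 4 (t.val % 5 + 5*((t.val/5 + (2*k+1) - j.val) % (2*k+1)))) := by
            refine Finset.sum_congr rfl (fun j _ => ?_)
            rw [Fin.sum_univ_five, Zmat_rowIdx, Zmat_rowIdx, Zmat_rowIdx, Zmat_rowIdx,
              Zmat_rowIdx, vOne_rowIdx, vOne_rowIdx, vOne_rowIdx, vOne_rowIdx, vOne_rowIdx,
              c0, c1, c2, c3, c4]
            norm_num
            ring
        _ = ∑ m ∈ Finset.range (2*k+1),
            (zRow (5*(2*k+1)) 0 (t.val % 5 + 5*m) + zRow (5*(2*k+1)) 3 (t.val % 5 + 5*m)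
              - zRow (5*(2*k+1)) 4 (t.val % 5 + 5*m)) :=
          shift_sum (2*k+1) (by omega) (t.val/5)
            (fun m => zRow (5*(2*k+1)) 0 (t.val % 5 + 5*m) + zRow (5*(2*k+1)) 3 (t.val % 5 + 5*m)
              - zRow (5*(2*k+1)) 4 (t.val % 5 + 5*m))
        _ = 0 := Fclass k (t.val % 5) hk (by omega)
    have hm2 : (fun _ => (1:ℂ)) ∈ LinearMap.ker ((Zmat (5*(2*k+1)))ᵀ.mulVecLin) := by
      rw [LinearMap.mem_ker, Matrix.mulVecLin_apply]
      funext t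
      simp only [Matrix.mulVec, dotProduct, Matrix.transpose_apply, Pi.zero_apply,
        mul_one]
      exact hH t
    have hli : LinearIndependent ℂ ![vOne k, fun _ => (1:ℂ)] := by
      rw [LinearIndependent.pair_iff]
      intro a b hab
      have h0 := congrFun hab ⟨0, by omega⟩
      have h1 := congrFun hab ⟨1, by omega⟩
      simp only [Pi.add_apply, Pi.smul_apply, smul_eq_mul, Pi.zero_apply, vOne] at h0 h1
      norm_num at h0 h1
      exact ⟨by linear_combination h0 - h1, h1⟩
    have hw : LinearIndependent ℂ
        (![⟨vOne k, hm1⟩, ⟨fun _ => (1:ℂ), hm2⟩] :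
          Fin 2 → LinearMap.ker ((Zmat (5*(2*k+1)))ᵀ.mulVecLin)) := by
      apply LinearIndependent.of_comp (LinearMap.ker ((Zmat (5*(2*k+1)))ᵀ.mulVecLin)).subtype
      convert hli using 1
      funext i
      fin_cases i <;> rfl
      rfl
    have hcard : 2 ≤ Module.finrank ℂ (LinearMap.ker ((Zmat (5*(2*k+1)))ᵀ.mulVecLin)) := by
      simpa using hw.fintype_card_le_finrank
    have hrn := LinearMap.finrank_range_add_finrank_ker ((Zmat (5*(2*k+1)))ᵀ.mulVecLin)
    rw [Module.finrank_fintype_fun_eq_card, Fintype.card_fin] at hrn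
    have hrt : (Zmat (5*(2*k+1))).rank = (Zmat (5*(2*k+1)))ᵀ.rank :=
      (Matrix.rank_transpose _).symm
    have hMr : (Zmat (5*(2*k+1)))ᵀ.rank
        = Module.finrank ℂ (LinearMap.range ((Zmat (5*(2*k+1)))ᵀ.mulVecLin)) := rfl
    omega
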